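/- Let n, k ≥ 1, p ≥ 2, and let u : ℝⁿ → ℝᵏ be smooth with compact support. Then ∫_{ℝⁿ} |u|^{p−2} |Du|² dx ≤ ∫_{ℝⁿ} |u|^{p−2} ⟨u, −Δu⟩ dx, where both integrands are interpreted as 0 at points where u vanishes. -/

import Mathlib

open MeasureTheory RealInnerProductSpace
open scoped Classical

/-- Squared Frobenius norm of the total derivative `Du(x)`. -/
noncomputable def frobSq {n k : ℕ} (u : EuclideanSpace ℝ (Fin n) → EuclideanSpace ℝ (Fin k))
    (x : EuclideanSpace ℝ (Fin n)) : ℝ :=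
  ∑ i : Fin n, ‖fderiv ℝ u x (EuclideanSpace.single i 1)‖ ^ 2

/-- Componentwise Laplacian of a vector-valued function. -/
noncomputable def lapVec {n k : ℕ} (u : EuclideanSpace ℝ (Fin n) → EuclideanSpace ℝ (Fin k))
    (x : EuclideanSpace ℝ (Fin n)) : EuclideanSpace ℝ (Fin k) :=
  ∑ i : Fin n, iteratedFDeriv ℝ 2 u x ![EuclideanSpace.single i 1, EuclideanSpace.single i 1]

namespace Stmt4Aux

variable {n k : ℕ}

local notation "E" => EuclideanSpace ℝ (Fin n)
local notation "F" => EuclideanSpace ℝ (Fin k)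

noncomputable def du (u : E → F) (i : Fin n) (x : E) : F :=
  fderiv ℝ u x (EuclideanSpace.single i 1)

noncomputable def ddu (u : E → F) (i : Fin n) (x : E) : F :=
  fderiv ℝ (du u i) x (EuclideanSpace.single i 1)

noncomputable def w (p : ℝ) (u : E → F) (i : Fin n) (x : E) : ℝ :=
  ‖u x‖ ^ (p - 2) * ⟪u x, du u i x⟫

noncomputable def T (p : ℝ) (u : E → F) (i : Fin n) (x : E) : ℝ :=
  if u x = 0 then 0 else (p - 2) * ⟪u x, du u i x⟫ ^ 2 / ‖u x‖ ^ 2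

noncomputable def D (p : ℝ) (u : E → F) (i : Fin n) (x : E) : ℝ :=
  ‖u x‖ ^ (p - 2) * (T p u i x + ‖du u i x‖ ^ 2 + ⟪u x, ddu u i x⟫)

theorem contDiff_du (u : E → F) (hu : ContDiff ℝ (⊤ : ℕ∞) u) (i : Fin n) :
    ContDiff ℝ (⊤ : ℕ∞) (du u i) := by
  exact (hu.fderiv_right (m := (⊤:ℕ∞)) (by norm_num)).clm_apply contDiff_const

theorem norm_rpow_eq (q : ℝ) (y : F) : ‖y‖ ^ q = (⟪y, y⟫ : ℝ) ^ (q / 2) := by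
  rw [real_inner_self_eq_norm_sq, ← Real.rpow_natCast ‖y‖ 2, ← Real.rpow_mul (norm_nonneg y)]
  norm_num
  rw [show (2:ℝ) * (q/2) = q by ring]


theorem hasLineDerivAt_w {p : ℝ} {u : E → F} (hp : 2 ≤ p) (hu : ContDiff ℝ (⊤ : ℕ∞) u)
    (hsupp : HasCompactSupport u) (i : Fin n) (x : E) :
    HasLineDerivAt ℝ (w p u i) (D p u i x) x (EuclideanSpace.single i 1) := by
  set v : E := EuclideanSpace.single i 1 with hv
  have hud : Differentiable ℝ u := hu.differentiable (by norm_num)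
  have hdu : ContDiff ℝ (⊤ : ℕ∞) (du u i) := contDiff_du u hu i
  have hγ : HasDerivAt (fun t : ℝ => x + t • v) v 0 := by
    simpa using ((hasDerivAt_id (0:ℝ)).smul_const v).const_add x
  have hU : HasDerivAt (fun t : ℝ => u (x + t • v)) (du u i x) 0 := by
    have h1 : HasFDerivAt u (fderiv ℝ u x) (x + (0:ℝ) • v) := by
      simpa using (hud x).hasFDerivAt
    exact h1.comp_hasDerivAt 0 hγ
  have hV : HasDerivAt (fun t : ℝ => du u i (x + t • v)) (ddu u i x) 0 := by
    have h1 : HasFDerivAt (du u i) (fderiv ℝ (du u i) x) (x + (0:ℝ) • v) := by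
      simpa using ((hdu.differentiable (by norm_num)) x).hasFDerivAt
    exact h1.comp_hasDerivAt 0 hγ
  have hψ : HasDerivAt (fun t : ℝ => (⟪u (x + t • v), du u i (x + t • v)⟫ : ℝ))
      (⟪u x, ddu u i x⟫ + ⟪du u i x, du u i x⟫) 0 := by
    simpa using hU.inner ℝ hV
  by_cases h0 : u x = 0
  · have hw0 : w p u i x = 0 := by rw [w, h0, inner_zero_left, mul_zero]
    by_cases hp2 : p = 2
    · subst hp2
      have hD : D 2 u i x = ⟪u x, ddu u i x⟫ + ⟪du u i x, du u i x⟫ := by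
        rw [D, T, if_pos h0, h0]
        simp only [show (2:ℝ) - 2 = 0 by ring, norm_zero, Real.rpow_zero, inner_zero_left,
          real_inner_self_eq_norm_sq]
        ring
      have heq : (fun t : ℝ => w 2 u i (x + t • v)) =
          fun t : ℝ => (⟪u (x + t • v), du u i (x + t • v)⟫ : ℝ) := by
        funext t
        rw [w, show (2:ℝ) - 2 = 0 by ring, Real.rpow_zero, one_mul]
      rw [HasLineDerivAt, heq, hD]
      exact hψ
    · have hp2' : 0 < p - 2 := by
        rcases lt_or_eq_of_le hp with h | h
        · linarith
        · exact absurd h.symm hp2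
      have hD0 : D p u i x = 0 := by
        rw [D, h0, norm_zero, Real.zero_rpow (ne_of_gt hp2'), zero_mul]
      obtain ⟨Mf, hMf⟩ := (hsupp.fderiv ℝ).exists_bound_of_continuous
        (hu.continuous_fderiv (by norm_num))
      have hMf0 : 0 ≤ Mf := (norm_nonneg _).trans (hMf x)
      obtain ⟨Md, hMd⟩ := ((hsupp.fderiv ℝ).comp_left
        (g := fun L : E →L[ℝ] F => L v) rfl).exists_bound_of_continuous
        ((hdu.continuous))
      have hMd' : ∀ y, ‖du u i y‖ ≤ Md := fun y => hMd y
      have hLip : ∀ t : ℝ, ‖u (x + t • v)‖ ≤ Mf * |t| := by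
        intro t
        have h1 := (convex_univ : Convex ℝ (Set.univ : Set E)).norm_image_sub_le_of_norm_fderiv_le
          (fun y _ => hud y) (fun y _ => hMf y) (Set.mem_univ x) (Set.mem_univ (x + t • v))
        rw [h0, sub_zero] at h1
        calc ‖u (x + t • v)‖ ≤ Mf * ‖x + t • v - x‖ := h1
          _ = Mf * |t| := by
              rw [add_sub_cancel_left, norm_smul, EuclideanSpace.norm_single,
                Real.norm_eq_abs, norm_one, mul_one]
      have hb : ∀ t : ℝ, |w p u i (x + t • v)| ≤ (Mf * |t|) ^ (p - 2) * ((Mf * |t|) * Md) := by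
        intro t
        have h1 : |w p u i (x + t • v)| ≤
            ‖u (x + t • v)‖ ^ (p - 2) * (‖u (x + t • v)‖ * ‖du u i (x + t • v)‖) := by
          rw [w, abs_mul, abs_of_nonneg (Real.rpow_nonneg (norm_nonneg _) _)]
          gcongr
          exact abs_real_inner_le_norm _ _
        refine h1.trans ?_
        have h2 := hLip t
        have h3 := hMd' (x + t • v)
        have hd0 : (0:ℝ) ≤ ‖du u i (x + t • v)‖ := norm_nonneg _
        gcongr
      rw [HasLineDerivAt, hD0, hasDerivAt_iff_isLittleO]
      simp only [zero_smul, add_zero, sub_zero, smul_zero, hw0]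
      rw [Asymptotics.isLittleO_iff]
      intro c hc
      have h0' : Filter.Tendsto (fun t : ℝ => Mf * |t|) (nhds 0) (nhds 0) := by
        have hc' : Continuous fun t : ℝ => Mf * |t| := continuous_const.mul continuous_abs
        simpa using hc'.tendsto (0:ℝ)
      have h1' := (Real.continuousAt_rpow_const 0 (p-2) (Or.inr (le_of_lt hp2'))).tendsto.comp h0'
      rw [Real.zero_rpow (ne_of_gt hp2')] at h1'
      have htend : Filter.Tendsto (fun t : ℝ => (Mf * |t|) ^ (p - 2) * (Mf * Md))
          (nhds 0) (nhds 0) := by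
        simpa using h1'.mul_const (Mf * Md)
      have hev : ∀ᶠ t in nhds (0:ℝ), (Mf * |t|) ^ (p - 2) * (Mf * Md) < c :=
        htend.eventually_lt_const hc
      filter_upwards [hev] with t ht
      have := hb t
      rw [Real.norm_eq_abs, Real.norm_eq_abs]
      calc |w p u i (x + t • v)| ≤ (Mf * |t|) ^ (p - 2) * ((Mf * |t|) * Md) := hb t
        _ = ((Mf * |t|) ^ (p - 2) * (Mf * Md)) * |t| := by ring
        _ ≤ c * |t| := by
            apply mul_le_mul_of_nonneg_right (le_of_lt ht) (abs_nonneg t)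
  · -- nonzero case
    have hn : HasDerivAt (fun t : ℝ => (⟪u (x + t • v), u (x + t • v)⟫ : ℝ))
        (⟪u x, du u i x⟫ + ⟪du u i x, u x⟫) 0 := by
      simpa using hU.inner ℝ hU
    have hinz : (⟪u (x + (0:ℝ) • v), u (x + (0:ℝ) • v)⟫ : ℝ) ≠ 0 := by
      simp only [zero_smul, add_zero, real_inner_self_eq_norm_sq]
      exact pow_ne_zero 2 (norm_ne_zero_iff.2 h0)
    have hφ : HasDerivAt (fun t : ℝ => (⟪u (x + t • v), u (x + t • v)⟫ : ℝ) ^ ((p-2)/2))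
        ((⟪u x, du u i x⟫ + ⟪du u i x, u x⟫) * ((p-2)/2) *
          (⟪u (x + (0:ℝ) • v), u (x + (0:ℝ) • v)⟫ : ℝ) ^ ((p-2)/2 - 1)) 0 :=
      hn.rpow_const (Or.inl hinz)
    have heq : (fun t : ℝ => w p u i (x + t • v)) =
        fun t : ℝ => (⟪u (x + t • v), u (x + t • v)⟫ : ℝ) ^ ((p-2)/2) *
          (⟪u (x + t • v), du u i (x + t • v)⟫ : ℝ) := by
      funext t
      rw [w, norm_rpow_eq]
    rw [HasLineDerivAt, heq]
    have this : HasDerivAt (fun t : ℝ => (⟪u (x + t • v), u (x + t • v)⟫ : ℝ) ^ ((p-2)/2) *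
      (⟪u (x + t • v), du u i (x + t • v)⟫ : ℝ)) _ 0 := hφ.mul hψ
    simp only [zero_smul, add_zero] at this
    refine this.congr_deriv (Eq.symm ?_)
    have e1 : (⟪u x, u x⟫ : ℝ) = ‖u x‖ ^ 2 := real_inner_self_eq_norm_sq (u x)
    have hnz2 : (‖u x‖ ^ 2 : ℝ) ≠ 0 := pow_ne_zero 2 (norm_ne_zero_iff.2 h0)
    have e2 : ((‖u x‖ ^ 2 : ℝ)) ^ ((p-2)/2 - 1) = ‖u x‖ ^ (p - 2) / ‖u x‖ ^ 2 := by
      rw [Real.rpow_sub_one hnz2, norm_rpow_eq (p-2), real_inner_self_eq_norm_sq]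
    have e3 : ((‖u x‖ ^ 2 : ℝ)) ^ ((p-2)/2) = ‖u x‖ ^ (p - 2) := by
      rw [norm_rpow_eq (p-2), real_inner_self_eq_norm_sq]
    rw [D, T, if_neg h0]
    simp only [e1, e2, e3, zero_smul, add_zero]
    rw [real_inner_comm (du u i x) (u x), real_inner_self_eq_norm_sq (du u i x)]
    field_simp
    ring


theorem contDiff_ddu (u : E → F) (hu : ContDiff ℝ (⊤ : ℕ∞) u) (i : Fin n) :
    ContDiff ℝ (⊤ : ℕ∞) (ddu u i) := by
  exact ((contDiff_du u hu i).fderiv_right (m := (⊤:ℕ∞)) (by norm_num)).clm_apply contDiff_const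

theorem du_zero (u : E → F) (i : Fin n) {x : E} (hx : x ∉ tsupport u) : du u i x = 0 := by
  rw [du, fderiv_of_notMem_tsupport ℝ hx]
  rfl

theorem ddu_zero (u : E → F) (i : Fin n) {x : E} (hx : x ∉ tsupport u) : ddu u i x = 0 := by
  have h : x ∉ tsupport (du u i) := by
    intro hmem
    have hsub : tsupport (du u i) ⊆ tsupport u := by
      apply closure_minimal _ (isClosed_closure)
      intro y hy
      by_contra hyt
      exact hy (du_zero u i hyt)
    exact hx (hsub hmem)
  rw [ddu, fderiv_of_notMem_tsupport ℝ h]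
  rfl

/-- A bounded measurable function vanishing outside a compact set is integrable. -/
theorem integrable_of_bdd {f : E → ℝ} (hm : AEStronglyMeasurable f (volume : Measure E))
    {K : Set E} (hK : IsCompact K) (hf0 : ∀ x ∉ K, f x = 0) {C : ℝ} (hC : ∀ x, |f x| ≤ C) :
    Integrable f := by
  have hfi : f = K.indicator f := by
    funext x
    by_cases hx : x ∈ K
    · rw [Set.indicator_of_mem hx]
    · rw [Set.indicator_of_notMem hx, hf0 x hx]
  rw [hfi, integrable_indicator_iff hK.measurableSet]
  exact Measure.integrableOn_of_bounded hK.measure_lt_top.ne hm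
    (Filter.Eventually.of_forall fun x => by rw [Real.norm_eq_abs]; exact hC x)

theorem T_nonneg (hp : 2 ≤ p) (u : E → F) (i : Fin n) (x : E) : 0 ≤ T p u i x := by
  rw [T]
  split
  · exact le_rfl
  · exact div_nonneg (mul_nonneg (by linarith) (sq_nonneg _)) (sq_nonneg _)


theorem du_supp (u : E → F) (hsupp : HasCompactSupport u) (i : Fin n) :
    HasCompactSupport (du u i) := by
  apply hsupp.mono'
  intro x hx
  by_contra ht
  exact hx (du_zero u i ht)

theorem continuous_w {p : ℝ} {u : E → F} (hp : 2 ≤ p) (hu : ContDiff ℝ (⊤ : ℕ∞) u) (i : Fin n) :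
    Continuous (w p u i) :=
  (hu.continuous.norm.rpow_const fun _ => Or.inr (by linarith)).mul
    (hu.continuous.inner (contDiff_du u hu i).continuous)

theorem w_supp (p : ℝ) (u : E → F) (hsupp : HasCompactSupport u) (i : Fin n) :
    HasCompactSupport (w p u i) := by
  apply hsupp.mono'
  intro x hx
  by_contra ht
  apply hx
  rw [w, image_eq_zero_of_notMem_tsupport ht, inner_zero_left, mul_zero]

theorem integrable_bT {p : ℝ} {u : E → F} (hp : 2 ≤ p) (hu : ContDiff ℝ (⊤ : ℕ∞) u)
    (hsupp : HasCompactSupport u) (i : Fin n) :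
    Integrable (fun x => ‖u x‖ ^ (p - 2) * T p u i x) := by
  obtain ⟨Mu, hMu⟩ := hsupp.exists_bound_of_continuous hu.continuous
  obtain ⟨Md, hMd⟩ := (du_supp u hsupp i).exists_bound_of_continuous
    (contDiff_du u hu i).continuous
  have hMu0 : 0 ≤ Mu := (norm_nonneg _).trans (hMu 0)
  refine integrable_of_bdd ?_ hsupp ?_ ?_ (C := Mu ^ (p - 2) * ((p - 2) * Md ^ 2))
  · apply Measurable.aestronglyMeasurable
    apply ((hu.continuous.norm.rpow_const fun _ => Or.inr (by linarith)).measurable).mul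
    apply Measurable.ite ((isClosed_eq hu.continuous continuous_const).measurableSet)
      measurable_const
    exact ((continuous_const.mul ((hu.continuous.inner
      (contDiff_du u hu i).continuous).pow 2)).measurable).div
      ((hu.continuous.norm.pow 2).measurable)
  · intro x hx
    rw [T, if_pos (image_eq_zero_of_notMem_tsupport hx), mul_zero]
  · intro x
    rw [abs_mul, abs_of_nonneg (Real.rpow_nonneg (norm_nonneg _) _),
      abs_of_nonneg (T_nonneg hp u i x)]
    apply mul_le_mul _ _ (T_nonneg hp u i x) (Real.rpow_nonneg hMu0 _)
    · exact Real.rpow_le_rpow (norm_nonneg _) (hMu x) (by linarith)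
    · rw [T]
      split
      · exact mul_nonneg (by linarith) (sq_nonneg _)
      · rename_i h0
        have ha : (0:ℝ) < ‖u x‖ ^ 2 := by
          have := norm_pos_iff.mpr h0
          positivity
        rw [div_le_iff₀ ha]
        calc (p - 2) * (⟪u x, du u i x⟫:ℝ) ^ 2
            ≤ (p - 2) * (‖u x‖ * ‖du u i x‖) ^ 2 := by
              apply mul_le_mul_of_nonneg_left _ (by linarith)
              rw [← sq_abs]
              exact pow_le_pow_left₀ (abs_nonneg _) (abs_real_inner_le_norm _ _) 2
          _ = ((p - 2) * ‖du u i x‖ ^ 2) * ‖u x‖ ^ 2 := by ring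
          _ ≤ ((p - 2) * Md ^ 2) * ‖u x‖ ^ 2 := by
              apply mul_le_mul_of_nonneg_right _ (sq_nonneg _)
              exact mul_le_mul_of_nonneg_left
                (pow_le_pow_left₀ (norm_nonneg _) (hMd x) 2) (by linarith)

theorem integrable_brest {p : ℝ} {u : E → F} (hp : 2 ≤ p) (hu : ContDiff ℝ (⊤ : ℕ∞) u)
    (hsupp : HasCompactSupport u) (i : Fin n) :
    Integrable (fun x => ‖u x‖ ^ (p - 2) * (‖du u i x‖ ^ 2 + ⟪u x, ddu u i x⟫)) := by
  apply Continuous.integrable_of_hasCompactSupport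
  · exact (hu.continuous.norm.rpow_const fun _ => Or.inr (by linarith)).mul
      (((contDiff_du u hu i).continuous.norm.pow 2).add
        (hu.continuous.inner (contDiff_ddu u hu i).continuous))
  · apply hsupp.mono'
    intro x hx
    by_contra ht
    apply hx
    show ‖u x‖ ^ (p - 2) * (‖du u i x‖ ^ 2 + ⟪u x, ddu u i x⟫) = 0
    rw [du_zero u i ht, image_eq_zero_of_notMem_tsupport ht, norm_zero, inner_zero_left]
    norm_num

theorem D_split (p : ℝ) (u : E → F) (i : Fin n) :
    D p u i = (fun x => ‖u x‖ ^ (p - 2) * T p u i x) +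
      fun x => ‖u x‖ ^ (p - 2) * (‖du u i x‖ ^ 2 + ⟪u x, ddu u i x⟫) := by
  funext x
  simp only [Pi.add_apply, D]
  ring

theorem integrable_D {p : ℝ} {u : E → F} (hp : 2 ≤ p) (hu : ContDiff ℝ (⊤ : ℕ∞) u)
    (hsupp : HasCompactSupport u) (i : Fin n) : Integrable (D p u i) := by
  rw [D_split]
  exact (integrable_bT hp hu hsupp i).add (integrable_brest hp hu hsupp i)

theorem integral_D {p : ℝ} {u : E → F} (hp : 2 ≤ p) (hu : ContDiff ℝ (⊤ : ℕ∞) u)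
    (hsupp : HasCompactSupport u) (i : Fin n) : ∫ x, D p u i x = 0 := by
  have hline := fun x => hasLineDerivAt_w hp hu hsupp i x
  have hconst : ∀ x : E, HasLineDerivAt ℝ (fun _ : E => (1:ℝ)) 0 x (EuclideanSpace.single i 1) :=
    fun x => hasDerivAt_const (0:ℝ) (1:ℝ)
  have hwint : Integrable (w p u i) :=
    (continuous_w hp hu i).integrable_of_hasCompactSupport (w_supp p u hsupp i)
  have h1 : Integrable (fun x : E => (ContinuousLinearMap.mul ℝ ℝ) (D p u i x) ((1:ℝ))) := by
    simpa using integrable_D hp hu hsupp i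
  have h2 : Integrable (fun x : E => (ContinuousLinearMap.mul ℝ ℝ) (w p u i x) ((0:ℝ))) := by
    simpa using integrable_zero E ℝ (volume : Measure E)
  have h3 : Integrable (fun x : E => (ContinuousLinearMap.mul ℝ ℝ) (w p u i x) ((1:ℝ))) := by
    simpa using hwint
  have key := integral_bilinear_hasLineDerivAt_right_eq_neg_left_of_integrable
    (μ := (volume : Measure E)) (B := ContinuousLinearMap.mul ℝ ℝ) (f := w p u i)
    (f' := D p u i) (g := fun _ : E => (1:ℝ)) (g' := fun _ : E => (0:ℝ))
    (v := EuclideanSpace.single i 1) h1 h2 h3 (fun x _ => hline x) (fun x _ => hconst x)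
  simp only [ContinuousLinearMap.mul_apply', mul_zero, mul_one, integral_zero] at key
  linarith [key]


theorem ddu_eq (u : E → F) (hu : ContDiff ℝ (⊤ : ℕ∞) u) (i : Fin n) (x : E) :
    ddu u i x =
      iteratedFDeriv ℝ 2 u x ![EuclideanSpace.single i 1, EuclideanSpace.single i 1] := by
  rw [iteratedFDeriv_two_apply]
  have hdiff : DifferentiableAt ℝ (fderiv ℝ u) x :=
    ((hu.fderiv_right (m := (⊤:ℕ∞)) (by norm_num)).differentiable (by norm_num)) x
  have hkey := fderiv_clm_apply (𝕜 := ℝ) (c := fderiv ℝ u)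
    (u := fun _ : E => (EuclideanSpace.single i 1 : E)) hdiff (differentiableAt_const _)
  calc ddu u i x
      = fderiv ℝ (fun y => (fderiv ℝ u y) (EuclideanSpace.single i 1)) x
          (EuclideanSpace.single i 1) := rfl
    _ = fderiv ℝ (fderiv ℝ u) x (EuclideanSpace.single i 1) (EuclideanSpace.single i 1) := by
        rw [hkey]
        simp

theorem lapVec_eq (u : E → F) (hu : ContDiff ℝ (⊤ : ℕ∞) u) :
    lapVec u = fun x => ∑ i : Fin n, ddu u i x := by
  funext x
  rw [lapVec]
  exact Finset.sum_congr rfl fun i _ => (ddu_eq u hu i x).symm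

end Stmt4Aux

open Stmt4Aux

/-- For smooth compactly supported `u : ℝⁿ → ℝᵏ` and `p ≥ 2`,
`∫ |u|^{p-2} |Du|² ≤ ∫ |u|^{p-2} ⟨u, -Δu⟩`, with the integrands interpreted as `0`
where `u` vanishes. -/
theorem stmt4 (n k : ℕ) (hn : 1 ≤ n) (hk : 1 ≤ k) (p : ℝ) (hp : 2 ≤ p)
    (u : EuclideanSpace ℝ (Fin n) → EuclideanSpace ℝ (Fin k))
    (hu : ContDiff ℝ (⊤ : ℕ∞) u) (hsupp : HasCompactSupport u) :
    (∫ x, if u x = 0 then (0 : ℝ) else ‖u x‖ ^ (p - 2) * frobSq u x) ≤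
      ∫ x, if u x = 0 then (0 : ℝ) else ‖u x‖ ^ (p - 2) * ⟪u x, -lapVec u x⟫ := by
  have hcu := hu.continuous
  have hb : Continuous fun x => ‖u x‖ ^ (p - 2) :=
    hcu.norm.rpow_const fun _ => Or.inr (by linarith)
  have hlv := lapVec_eq u hu
  -- the function h := |u|^{p-2} frobSq
  have hhc : Continuous fun x => ‖u x‖ ^ (p - 2) * frobSq u x := by
    apply hb.mul
    apply continuous_finset_sum
    intro i _
    exact ((contDiff_du u hu i).continuous.norm.pow 2)
  have hhs : HasCompactSupport fun x => ‖u x‖ ^ (p - 2) * frobSq u x := by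
    apply hsupp.mono'
    intro x hx
    by_contra ht
    apply hx
    show ‖u x‖ ^ (p - 2) * frobSq u x = 0
    simp [frobSq, fderiv_of_notMem_tsupport ℝ ht]
  have hIh : Integrable (fun x => ‖u x‖ ^ (p - 2) * frobSq u x) :=
    hhc.integrable_of_hasCompactSupport hhs
  have hIg : Integrable (fun x => ‖u x‖ ^ (p - 2) * ⟪u x, lapVec u x⟫) := by
    apply Continuous.integrable_of_hasCompactSupport
    · apply hb.mul
      apply hcu.inner
      rw [hlv]
      apply continuous_finset_sum
      intro i _
      exact (contDiff_ddu u hu i).continuous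
    · apply hsupp.mono'
      intro x hx
      by_contra ht
      apply hx
      show ‖u x‖ ^ (p - 2) * ⟪u x, lapVec u x⟫ = 0
      rw [image_eq_zero_of_notMem_tsupport ht, inner_zero_left, mul_zero]
  have hIcc : Integrable (fun x => ∑ i : Fin n, ‖u x‖ ^ (p - 2) * T p u i x) :=
    integrable_finset_sum _ fun i _ => integrable_bT hp hu hsupp i
  have hsum : ∀ x, (∑ i : Fin n, D p u i x) =
      (∑ i : Fin n, ‖u x‖ ^ (p - 2) * T p u i x) +
        (‖u x‖ ^ (p - 2) * frobSq u x + ‖u x‖ ^ (p - 2) * ⟪u x, lapVec u x⟫) := by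
    intro x
    rw [hlv]
    simp only [frobSq, inner_sum, Finset.mul_sum]
    rw [← Finset.sum_add_distrib, ← Finset.sum_add_distrib]
    apply Finset.sum_congr rfl
    intro i _
    rw [D, du]
    ring
  have hint_sum : ∫ x, (∑ i : Fin n, D p u i x) = 0 := by
    rw [integral_finset_sum _ (fun i _ => integrable_D hp hu hsupp i)]
    exact Finset.sum_eq_zero fun i _ => integral_D hp hu hsupp i
  have h0 : (∫ x, ∑ i : Fin n, ‖u x‖ ^ (p - 2) * T p u i x) +
      ∫ x, (‖u x‖ ^ (p - 2) * frobSq u x + ‖u x‖ ^ (p - 2) * ⟪u x, lapVec u x⟫) = 0 := by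
    have heq : ∫ x, (∑ i : Fin n, D p u i x) =
        ∫ x, ((∑ i : Fin n, ‖u x‖ ^ (p - 2) * T p u i x) +
          (‖u x‖ ^ (p - 2) * frobSq u x + ‖u x‖ ^ (p - 2) * ⟪u x, lapVec u x⟫)) := by
      congr 1
      funext x
      rw [hsum x]
    rw [← hint_sum, heq]
    have := integral_add hIcc (hIh.add hIg)
    simp only [Pi.add_apply] at this
    rw [this]
  have hsplit : ∫ x, (‖u x‖ ^ (p - 2) * frobSq u x + ‖u x‖ ^ (p - 2) * ⟪u x, lapVec u x⟫) =
      (∫ x, ‖u x‖ ^ (p - 2) * frobSq u x) + ∫ x, ‖u x‖ ^ (p - 2) * ⟪u x, lapVec u x⟫ :=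
    integral_add hIh hIg
  have hccpos : 0 ≤ ∫ x, ∑ i : Fin n, ‖u x‖ ^ (p - 2) * T p u i x :=
    integral_nonneg fun x => Finset.sum_nonneg fun i _ =>
      mul_nonneg (Real.rpow_nonneg (norm_nonneg _) _) (T_nonneg hp u i x)
  -- LHS comparison
  obtain ⟨Ch, hCh⟩ := hhs.exists_bound_of_continuous hhc
  have hCh0 : 0 ≤ Ch := (norm_nonneg _).trans (hCh 0)
  have hfrob0 : ∀ x, 0 ≤ frobSq u x := fun x =>
    Finset.sum_nonneg fun i _ => pow_nonneg (norm_nonneg _) 2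
  have hIif : Integrable (fun x =>
      if u x = 0 then (0:ℝ) else ‖u x‖ ^ (p - 2) * frobSq u x) := by
    refine integrable_of_bdd ?_ hsupp ?_ (C := Ch) ?_
    · apply Measurable.aestronglyMeasurable
      exact Measurable.ite ((isClosed_eq hcu continuous_const).measurableSet)
        measurable_const hhc.measurable
    · intro x hx
      rw [if_pos (image_eq_zero_of_notMem_tsupport hx)]
    · intro x
      split_ifs with hx
      · simpa using hCh0
      · rw [← Real.norm_eq_abs]
        exact hCh x
  have hle1 : (∫ x, if u x = 0 then (0:ℝ) else ‖u x‖ ^ (p - 2) * frobSq u x) ≤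
      ∫ x, ‖u x‖ ^ (p - 2) * frobSq u x := by
    apply integral_mono hIif hIh
    intro x
    dsimp only
    split_ifs with hx
    · exact mul_nonneg (Real.rpow_nonneg (norm_nonneg _) _) (hfrob0 x)
    · exact le_rfl
  have hRHSeq : (∫ x, if u x = 0 then (0:ℝ) else ‖u x‖ ^ (p - 2) * ⟪u x, -lapVec u x⟫) =
      - ∫ x, ‖u x‖ ^ (p - 2) * ⟪u x, lapVec u x⟫ := by
    rw [← integral_neg]
    congr 1
    funext x
    split_ifs with hx
    · rw [hx, inner_zero_left, mul_zero, neg_zero]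
    · rw [inner_neg_right, mul_neg]
  rw [hRHSeq]
  rw [hsplit] at h0
  linarith
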